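/- Let C ⊆ ℝⁿ be nonempty, closed, and convex. Let z*(ε) = argmin_{z ∈ C} zᵀ(I + ε^β M)z with M positive semidefinite and z*(0) = argmin_{z ∈ C} ‖z‖². Then ‖z*(ε) - z*(0)‖² ≤ λ_max(M)·ε^β·‖z*(0)‖², so the minimizer depends continuously on ε with ‖z*(ε) - z*(0)‖ ≤ √(λ_max(M))·ε^{β/2}·‖z*(0)‖ → 0 as ε → 0. -/

import Mathlib

open Matrix

/-- Continuity of the regularized quadratic program's minimizer in the regularization weight. -/
theorem stmt_10 {n : ℕ} (M : Matrix (Fin n) (Fin n) ℝ) (hM : M.PosSemidef)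
    (C : Set (Fin n → ℝ)) (hne : C.Nonempty) (hcl : IsClosed C) (hconv : Convex ℝ C)
    (lM : ℝ) (hlM : 0 ≤ lM) (hlMmax : ∀ x : Fin n → ℝ, x ⬝ᵥ (M *ᵥ x) ≤ lM * (x ⬝ᵥ x))
    (β ε : ℝ) (hβ : 0 < β) (hε : 0 ≤ ε)
    (zε z0 : Fin n → ℝ) (hzε : zε ∈ C) (hz0 : z0 ∈ C)
    (hminε : ∀ z ∈ C, zε ⬝ᵥ ((1 + ε ^ β • M) *ᵥ zε) ≤ z ⬝ᵥ ((1 + ε ^ β • M) *ᵥ z))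
    (hmin0 : ∀ z ∈ C, z0 ⬝ᵥ z0 ≤ z ⬝ᵥ z) :
    (zε - z0) ⬝ᵥ (zε - z0) ≤ lM * ε ^ β * (z0 ⬝ᵥ z0) ∧
    Real.sqrt ((zε - z0) ⬝ᵥ (zε - z0)) ≤
      Real.sqrt lM * ε ^ (β / 2) * Real.sqrt (z0 ⬝ᵥ z0) := by
  set e : ℝ := ε ^ β with he_def
  have he : 0 ≤ e := Real.rpow_nonneg hε β
  set w : Fin n → ℝ := zε - z0 with hw
  set a : ℝ := z0 ⬝ᵥ w with ha_def
  set b : ℝ := w ⬝ᵥ w with hb_def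
  have hbnn : 0 ≤ b := Finset.sum_nonneg fun i _ => mul_self_nonneg _
  -- key quadratic inequality from optimality of z0 along segment
  have hquad : ∀ t : ℝ, 0 ≤ t → t ≤ 1 → 0 ≤ 2 * t * a + t ^ 2 * b := by
    intro t ht ht1
    have hmem : (1 - t) • z0 + t • zε ∈ C :=
      hconv hz0 hzε (by linarith) ht (by ring)
    have heq : (1 - t) • z0 + t • zε = z0 + t • w := by
      simp only [hw]; module
    rw [heq] at hmem
    have := hmin0 _ hmem
    have hexp : (z0 + t • w) ⬝ᵥ (z0 + t • w)
        = z0 ⬝ᵥ z0 + 2 * t * a + t ^ 2 * b := by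
      simp only [add_dotProduct, dotProduct_add, smul_dotProduct, dotProduct_smul,
        smul_eq_mul, ha_def, hb_def, dotProduct_comm w z0]
      ring
    rw [hexp] at this
    linarith
  have ha : 0 ≤ a := by
    by_contra ha
    push_neg at ha
    rcases eq_or_lt_of_le hbnn with hb0 | hbpos
    · have : w = 0 := by
        have := (dotProduct_self_eq_zero (v := w)).mp hb0.symm
        exact this
      rw [ha_def, this] at ha
      simp at ha
    · set t : ℝ := min 1 (-a / b) with ht_def
      have htpos : 0 < t := lt_min one_pos (div_pos (by linarith) hbpos)
      have ht1 : t ≤ 1 := min_le_left _ _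
      have htb : t * b ≤ -a := by
        have : t ≤ -a / b := min_le_right _ _
        calc t * b ≤ (-a / b) * b := by nlinarith
          _ = -a := by field_simp
      have h := hquad t htpos.le ht1
      nlinarith
  -- expansion: zε⬝zε = z0⬝z0 + 2a + b
  have hzz : zε ⬝ᵥ zε = z0 ⬝ᵥ z0 + 2 * a + b := by
    have : zε = z0 + w := by simp [hw]
    rw [this]
    simp only [add_dotProduct, dotProduct_add, ha_def, hb_def, dotProduct_comm w z0]
    ring
  -- from optimality of zε
  have hMε : 0 ≤ zε ⬝ᵥ (M *ᵥ zε) := by simpa using hM.dotProduct_mulVec_nonneg zε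
  have hopt := hminε z0 hz0
  have hexpε : ∀ v : Fin n → ℝ, v ⬝ᵥ ((1 + e • M) *ᵥ v) = v ⬝ᵥ v + e * (v ⬝ᵥ (M *ᵥ v)) := by
    intro v
    rw [Matrix.add_mulVec, Matrix.one_mulVec, Matrix.smul_mulVec, dotProduct_add,
      dotProduct_smul, smul_eq_mul]
  rw [hexpε zε, hexpε z0] at hopt
  have hM0 : z0 ⬝ᵥ (M *ᵥ z0) ≤ lM * (z0 ⬝ᵥ z0) := hlMmax z0
  have hmain : b ≤ lM * e * (z0 ⬝ᵥ z0) := by nlinarith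
  refine ⟨hmain, ?_⟩
  have hsq := Real.sqrt_le_sqrt hmain
  calc Real.sqrt b ≤ Real.sqrt (lM * e * (z0 ⬝ᵥ z0)) := hsq
    _ = Real.sqrt lM * Real.sqrt e * Real.sqrt (z0 ⬝ᵥ z0) := by
        rw [Real.sqrt_mul (by positivity), Real.sqrt_mul hlM]
    _ = Real.sqrt lM * ε ^ (β / 2) * Real.sqrt (z0 ⬝ᵥ z0) := by
        have : Real.sqrt e = ε ^ (β / 2) := by
          rw [he_def, Real.sqrt_eq_rpow, ← Real.rpow_mul hε]
          ring_nf
        rw [this]
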